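/- Let V be a finite set, ℰ a finite multiset of subsets of V, S ⊆ V a set such that every v ∈ V satisfies Cov({v}, ℰ) ≤ z/2, and suppose the optimal set S* of size k satisfies |S* \ S| ≤ 1 and Cov(S*, ℰ) ≥ z for some real z > 0. Then Cov(S, ℰ) ≥ z/2. -/

import Mathlib

/-- Coverage: number of hyperedges in the multiset `ℰ` intersecting `S`. -/
def Cov {V : Type*} [DecidableEq V] (S : Finset V) (ℰ : Multiset (Finset V)) : ℕ :=
  (ℰ.filter (fun E => (S ∩ E).Nonempty)).card

lemma Cov_mono {V : Type*} [DecidableEq V] {A B : Finset V} (h : A ⊆ B)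
    (ℰ : Multiset (Finset V)) : Cov A ℰ ≤ Cov B ℰ := by
  apply Multiset.card_le_card
  apply Multiset.monotone_filter_right
  intro E hE
  exact hE.mono (Finset.inter_subset_inter h le_rfl)

lemma Cov_union_le {V : Type*} [DecidableEq V] (A B : Finset V)
    (ℰ : Multiset (Finset V)) : Cov (A ∪ B) ℰ ≤ Cov A ℰ + Cov B ℰ := by
  classical
  induction ℰ using Multiset.induction with
  | empty => simp [Cov]
  | cons E s ih =>
    simp only [Cov, Multiset.filter_cons, Multiset.card_add] at *
    have hAB : ((A ∪ B) ∩ E).Nonempty → (A ∩ E).Nonempty ∨ (B ∩ E).Nonempty := by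
      rintro ⟨x, hx⟩
      simp only [Finset.mem_inter, Finset.mem_union] at hx
      rcases hx.1 with h | h
      · exact Or.inl ⟨x, Finset.mem_inter.2 ⟨h, hx.2⟩⟩
      · exact Or.inr ⟨x, Finset.mem_inter.2 ⟨h, hx.2⟩⟩
    by_cases h1 : ((A ∪ B) ∩ E).Nonempty <;>
      by_cases h2 : (A ∩ E).Nonempty <;>
      by_cases h3 : (B ∩ E).Nonempty <;>
      simp [h1, h2, h3] at * <;> omega

theorem stmt_13 {V : Type*} [Fintype V] [DecidableEq V]
    (ℰ : Multiset (Finset V)) (S Sstar : Finset V) (k : ℕ) (z : ℝ) (hz : 0 < z)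
    (hdeg : ∀ v : V, (Cov ({v} : Finset V) ℰ : ℝ) ≤ z / 2)
    (hcard : Sstar.card = k) (hdiff : (Sstar \ S).card ≤ 1)
    (hopt : (Cov Sstar ℰ : ℝ) ≥ z) :
    (Cov S ℰ : ℝ) ≥ z / 2 := by
  have hsplit : Cov Sstar ℰ ≤ Cov (Sstar ∩ S) ℰ + Cov (Sstar \ S) ℰ := by
    calc Cov Sstar ℰ ≤ Cov ((Sstar ∩ S) ∪ (Sstar \ S)) ℰ := by
          apply Cov_mono
          intro x hx
          by_cases hxS : x ∈ S
          · exact Finset.mem_union_left _ (Finset.mem_inter.2 ⟨hx, hxS⟩)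
          · exact Finset.mem_union_right _ (Finset.mem_sdiff.2 ⟨hx, hxS⟩)
      _ ≤ _ := Cov_union_le _ _ _
  have h1 : Cov (Sstar ∩ S) ℰ ≤ Cov S ℰ := Cov_mono Finset.inter_subset_right ℰ
  have h2 : (Cov (Sstar \ S) ℰ : ℝ) ≤ z / 2 := by
    rcases (Sstar \ S).eq_empty_or_nonempty with he | ⟨v, hv⟩
    · simp [he, Cov]
      linarith
    · have hsub : Sstar \ S ⊆ {v} := by
        intro x hx
        have := Finset.card_le_one.1 hdiff x hx v hv
        simp [this]
      calc (Cov (Sstar \ S) ℰ : ℝ) ≤ Cov ({v} : Finset V) ℰ := by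
            exact_mod_cast Cov_mono hsub ℰ
        _ ≤ z / 2 := hdeg v
  have hR : (Cov Sstar ℰ : ℝ) ≤ Cov S ℰ + z / 2 := by
    have hs' : (Cov Sstar ℰ : ℝ) ≤ (Cov (Sstar ∩ S) ℰ : ℝ) + Cov (Sstar \ S) ℰ := by
      exact_mod_cast hsplit
    have h1' : (Cov (Sstar ∩ S) ℰ : ℝ) ≤ Cov S ℰ := by exact_mod_cast h1
    linarith
  linarith
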